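/- If F is a shifted family of k-subsets of {1,...,n} with matching number at most s and clique number at least sk+k-1, then F is contained in the family of all k-subsets of {1,...,sk+k-1}, provided n ≥ (s+1)k. -/

import Mathlib

open Finset

/-- Coordinatewise (shifting) partial order on finite sets of naturals:
`A ≼ B` iff the increasing enumerations satisfy `aₗ ≤ bₗ` for all `l`. -/
def shiftLE (A B : Finset ℕ) : Prop :=
  List.Forall₂ (· ≤ ·) (A.sort (· ≤ ·)) (B.sort (· ≤ ·))

/-- A family on the ground set `{1,…,n}` is shifted. -/
def IsShifted (n : ℕ) (F : Finset (Finset ℕ)) : Prop :=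
  ∀ B ∈ F, ∀ A ⊆ Finset.Icc 1 n, shiftLE A B → A ∈ F

/-- The matching number of `F` is at most `s`. -/
def MatchingLE (F : Finset (Finset ℕ)) (s : ℕ) : Prop :=
  ∀ M ⊆ F, (M : Set (Finset ℕ)).PairwiseDisjoint id → M.card ≤ s

/-- `F` contains `s` pairwise disjoint members. -/
def HasMatching (F : Finset (Finset ℕ)) (s : ℕ) : Prop :=
  ∃ M ⊆ F, (M : Set (Finset ℕ)).PairwiseDisjoint id ∧ M.card = s

/-- The clique number of `F` (as a `k`-graph on `{1,…,n}`) is at least `q`. -/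
def HasClique (n : ℕ) (F : Finset (Finset ℕ)) (k q : ℕ) : Prop :=
  ∃ Q ⊆ Finset.Icc 1 n, Q.card = q ∧ Q.powersetCard k ⊆ F

lemma sorted_getElem_lt (l : List ℕ) (h : l.Pairwise (· < ·)) {i j : ℕ}
    (hi : i < l.length) (hj : j < l.length) (hij : i < j) : l[i] < l[j] := by
  have := h.sortedLT.strictMono_get (a := ⟨i, hi⟩) (b := ⟨j, hj⟩) (by simp [Fin.lt_def, hij])
  simpa using this

lemma gap_le (l : List ℕ) (h : l.Pairwise (· < ·)) (i : ℕ) :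
    ∀ d (hd : i + d < l.length), l[i]'(by omega) + d ≤ l[i + d] := by
  intro d
  induction d with
  | zero => simp
  | succ d ih =>
    intro hd
    have h1 : i + d < l.length := by omega
    have h2 : l[i + d] < l[i + d + 1]'(by omega) :=
      sorted_getElem_lt l h h1 (by omega) (by omega)
    have h3 := ih h1
    have h4 : l[i + (d + 1)]'hd = l[i + d + 1]'(by omega) := by congr 1
    omega

lemma gap_le' (l : List ℕ) (h : l.Pairwise (· < ·)) {i j : ℕ} (hij : i ≤ j)
    (hj : j < l.length) : l[i]'(by omega) + (j - i) ≤ l[j] := by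
  obtain ⟨d, rfl⟩ : ∃ d, j = i + d := ⟨j - i, by omega⟩
  have := gap_le l h i d hj
  have h4 : i + d - i = d := by omega
  rw [h4]
  exact this

lemma mem_of_sort_getElem {A : Finset ℕ} {l : List ℕ} (hl : l = A.sort (· ≤ ·)) {i : ℕ}
    (h : i < l.length) : l[i] ∈ A := by
  subst hl
  exact (Finset.mem_sort _).1 (List.getElem_mem h)

lemma sort_eq_of_sorted {l : List ℕ} (hs : l.Pairwise (· ≤ ·)) (hn : l.Nodup) :
    l.toFinset.sort (· ≤ ·) = l :=
  List.Perm.eq_of_pairwise' (Finset.pairwise_sort _ _) hs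
    (List.perm_of_nodup_nodup_toFinset_eq (Finset.sort_nodup _ _) hn (Finset.sort_toFinset _ _))

lemma clique_all (n k s : ℕ) (F : Finset (Finset ℕ)) (hq : s * k + k - 1 ≤ n)
    (hshift : IsShifted n F) (hclique : HasClique n F k (s * k + k - 1))
    (hs : 1 ≤ s) (hk : 1 ≤ k) :
    ∀ A ⊆ Finset.Icc 1 (s * k + k - 1), A.card = k → A ∈ F := by
  obtain ⟨Q, hQsub, hQcard, hQpow⟩ := hclique
  intro A hA hAcard
  have hsk : k ≤ s * k := Nat.le_mul_of_pos_left k hs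
  set q : List ℕ := Q.sort (· ≤ ·) with hqdef
  have hqlen : q.length = s * k + k - 1 := by rw [hqdef, Finset.length_sort, hQcard]
  set b : List ℕ := q.drop (s * k - 1) with hb
  have hblen : b.length = k := by rw [hb, List.length_drop, hqlen]; omega
  have hqnodup : q.Nodup := Finset.sort_nodup _ _
  have hbnodup : b.Nodup := hqnodup.sublist (List.drop_sublist _ _)
  have hqsorted : q.Pairwise (· < ·) := (Finset.sortedLT_sort Q).pairwise
  have hbsorted : b.Pairwise (· < ·) := hqsorted.sublist (List.drop_sublist _ _)
  have hBQ : b.toFinset ⊆ Q := fun x hx =>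
    (Finset.mem_sort _).1 (List.mem_of_mem_drop (List.mem_toFinset.1 hx))
  have hBcard : b.toFinset.card = k := by
    rw [List.toFinset_card_of_nodup hbnodup, hblen]
  have hBF : b.toFinset ∈ F := hQpow (Finset.mem_powersetCard.2 ⟨hBQ, hBcard⟩)
  have hBsort : b.toFinset.sort (· ≤ ·) = b := sort_eq_of_sorted (hbsorted.imp le_of_lt) hbnodup
  apply hshift b.toFinset hBF A (hA.trans (Finset.Icc_subset_Icc_right hq))
  show List.Forall₂ (· ≤ ·) (A.sort (· ≤ ·)) (b.toFinset.sort (· ≤ ·))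
  rw [hBsort]
  have halen : (A.sort (· ≤ ·)).length = k := by rw [Finset.length_sort, hAcard]
  have hasorted : (A.sort (· ≤ ·)).Pairwise (· < ·) := (Finset.sortedLT_sort A).pairwise
  rw [List.forall₂_iff_get]
  refine ⟨by rw [halen, hblen], ?_⟩
  intro i h1 h2
  simp only [List.get_eq_getElem]
  have hik : i < k := by omega
  -- upper bound on a[i]
  have hlastmem : (A.sort (· ≤ ·))[k - 1]'(by omega) ∈ A := mem_of_sort_getElem rfl _
  have hlast : (A.sort (· ≤ ·))[k - 1]'(by omega) ≤ s * k + k - 1 :=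
    (Finset.mem_Icc.1 (hA hlastmem)).2
  have hgapa : (A.sort (· ≤ ·))[i]'(by omega) + (k - 1 - i) ≤
      (A.sort (· ≤ ·))[k - 1]'(by omega) :=
    gap_le' _ hasorted (by omega) (by omega)
  have haub : (A.sort (· ≤ ·))[i] ≤ s * k + i := by omega
  -- lower bound on b[i]
  have hbget : b[i] = q[s * k - 1 + i]'(by omega) := by
    simp only [hb]
    exact List.getElem_drop
  have hq0 : 1 ≤ q[0]'(by omega) := by
    have hmem : q[0]'(by omega) ∈ Q := mem_of_sort_getElem hqdef _
    exact (Finset.mem_Icc.1 (hQsub hmem)).1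
  have hgapq : q[0]'(by omega) + (s * k - 1 + i - 0) ≤ q[s * k - 1 + i]'(by omega) :=
    gap_le' _ hqsorted (by omega) (by omega)
  have hblb : s * k + i ≤ b[i] := by
    rw [hbget]
    omega
  exact le_trans haub hblb

lemma exists_disjoint_family (k : ℕ) (hk : 0 < k) : ∀ s (T : Finset ℕ), s * k ≤ T.card →
    ∃ M : Finset (Finset ℕ), M.card = s ∧ (∀ A ∈ M, A ⊆ T ∧ A.card = k) ∧
      (M : Set (Finset ℕ)).PairwiseDisjoint id := by
  intro s
  induction s with
  | zero => exact fun T _ => ⟨∅, by simp, by simp, by simp⟩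
  | succ s ih =>
    intro T hT
    have hsk : s * k + k ≤ T.card := by
      have h : (s + 1) * k = s * k + k := by ring
      omega
    obtain ⟨A, hAT, hAcard⟩ := Finset.exists_subset_card_eq (show k ≤ T.card by omega)
    obtain ⟨M, hMcard, hMsub, hMdisj⟩ := ih (T \ A) (by
      rw [Finset.card_sdiff_of_subset hAT, hAcard]; omega)
    have hAnotM : A ∉ M := by
      intro hmem
      obtain ⟨x, hx⟩ := Finset.card_pos.1 (hAcard ▸ hk)
      exact (Finset.mem_sdiff.1 ((hMsub A hmem).1 hx)).2 hx
    refine ⟨insert A M, ?_, ?_, ?_⟩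
    · rw [Finset.card_insert_of_notMem hAnotM, hMcard]
    · intro A' hA'
      rcases Finset.mem_insert.1 hA' with h | h
      · exact h ▸ ⟨hAT, hAcard⟩
      · exact ⟨(hMsub A' h).1.trans Finset.sdiff_subset, (hMsub A' h).2⟩
    · rw [Finset.coe_insert]
      refine hMdisj.insert fun A' hA' _ => ?_
      have h1 : Disjoint A' A := Finset.sdiff_disjoint.mono_left (hMsub A' hA').1
      exact (h1.symm : Disjoint (id A) (id A'))

theorem stmt_1 (n k s : ℕ) (hn : (s + 1) * k ≤ n) (F : Finset (Finset ℕ))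
    (hF : F ⊆ (Finset.Icc 1 n).powersetCard k)
    (hshift : IsShifted n F) (hmatch : MatchingLE F s)
    (hclique : HasClique n F k (s * k + k - 1)) :
    F ⊆ (Finset.Icc 1 (s * k + k - 1)).powersetCard k := by
  intro B hB
  have hBmem := hF hB
  rw [Finset.mem_powersetCard] at hBmem
  obtain ⟨hBsub, hBcard⟩ := hBmem
  rcases Nat.eq_zero_or_pos k with hk0 | hk
  · subst hk0
    have hBe : B = ∅ := Finset.card_eq_zero.1 hBcard
    subst hBe
    simp [Finset.mem_powersetCard]
  rcases Nat.eq_zero_or_pos s with hs0 | hs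
  · exfalso
    have h := hmatch {B} (by simpa using hB) (by
      rw [Finset.coe_singleton]; exact Set.pairwiseDisjoint_singleton _ _)
    simp [hs0] at h
  have hskpos : 1 ≤ s * k := Nat.one_le_iff_ne_zero.2 (Nat.mul_ne_zero (by omega) (by omega))
  have hsk2 : k ≤ s * k := Nat.le_mul_of_pos_left k hs
  have hq : s * k + k - 1 ≤ n := by
    have h : (s + 1) * k = s * k + k := by ring
    omega
  rw [Finset.mem_powersetCard]
  refine ⟨?_, hBcard⟩
  by_contra hcon
  obtain ⟨x, hxB, hxnot⟩ := Finset.not_subset.1 hcon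
  have hinter : (Finset.Icc 1 (s * k + k - 1) ∩ B).card < k := by
    have hss : Finset.Icc 1 (s * k + k - 1) ∩ B ⊂ B := by
      refine ⟨Finset.inter_subset_right, fun hsub => ?_⟩
      exact hxnot (Finset.mem_inter.1 (hsub hxB)).1
    calc (Finset.Icc 1 (s * k + k - 1) ∩ B).card < B.card := Finset.card_lt_card hss
      _ = k := hBcard
  have hTcard : s * k ≤ (Finset.Icc 1 (s * k + k - 1) \ B).card := by
    have h1 : Finset.Icc 1 (s * k + k - 1) \ B =
        Finset.Icc 1 (s * k + k - 1) \ (Finset.Icc 1 (s * k + k - 1) ∩ B) := by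
      rw [Finset.sdiff_inter_self_left]
    have h2 : (Finset.Icc 1 (s * k + k - 1) \ B).card =
        (s * k + k - 1) - (Finset.Icc 1 (s * k + k - 1) ∩ B).card := by
      rw [h1, Finset.card_sdiff_of_subset Finset.inter_subset_left, Nat.card_Icc]
      omega
    omega
  obtain ⟨M, hMcard, hMsub, hMdisj⟩ :=
    exists_disjoint_family k hk s (Finset.Icc 1 (s * k + k - 1) \ B) hTcard
  have hBnotM : B ∉ M := by
    intro hmem
    obtain ⟨y, hy⟩ := Finset.card_pos.1 (hBcard ▸ hk)
    exact (Finset.mem_sdiff.1 ((hMsub B hmem).1 hy)).2 hy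
  have hMF : insert B M ⊆ F := by
    intro A hA
    rcases Finset.mem_insert.1 hA with h | h
    · exact h ▸ hB
    · exact clique_all n k s F hq hshift hclique hs hk A
        ((hMsub A h).1.trans Finset.sdiff_subset) (hMsub A h).2
  have hdisj : ((insert B M : Finset (Finset ℕ)) : Set (Finset ℕ)).PairwiseDisjoint id := by
    rw [Finset.coe_insert]
    refine hMdisj.insert fun A' hA' _ => ?_
    have h1 : Disjoint A' B := Finset.sdiff_disjoint.mono_left (hMsub A' hA').1
    exact (h1.symm : Disjoint (id B) (id A'))
  have hfin := hmatch (insert B M) hMF hdisj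
  rw [Finset.card_insert_of_notMem hBnotM, hMcard] at hfin
  omega
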